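/- Let H = (h_1, h_2, h_3) be a diagonal generator in the Pauli basis with h_1, h_2, h_3 ≥ 1, let C ∈ M_2 be positive semidefinite with Pauli expansion C = c_0 σ_0 + c_1 σ_1 + c_2 σ_2 + c_3 σ_3 (where c_i = (1/2) Tr(σ_i C) are real), and let C̃ be the diagonal matrix C̃ = c_0 σ_0 + (c_1^2 + c_2^2 + c_3^2)^{1/2} σ_3. Then for all t ≥ 0 and all q ≥ 1, ||e^{-tH}(C)||_q ≤ ||Δ_{e^{-t}}(C̃)||_q, where Δ_λ is the qubit depolarizing channel. -/

import Mathlib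

open scoped Matrix ComplexOrder

/- Common definitions: matrix algebras, Schatten norms, superoperator norms,
   tensor products of superoperators, complete positivity, semigroup generators. -/

namespace QHC

/-- The algebra of complex matrices indexed by `a`. -/
abbrev Mat (a : Type*) [Fintype a] [DecidableEq a] := Matrix a a ℂ

variable {a b : Type*} [Fintype a] [DecidableEq a] [Fintype b] [DecidableEq b]

/-- The Schatten `p`-norm `‖M‖_p = (Tr |M|^p)^{1/p}`, computed via the
eigenvalues of the positive semidefinite matrix `Mᴴ * M` (whose eigenvalues are the
squares of the singular values of `M`). -/
noncomputable def schatten (p : ℝ) (M : Mat a) : ℝ :=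
  (∑ i, (Matrix.posSemidef_conjTranspose_mul_self M).isHermitian.eigenvalues i ^ (p / 2)) ^ (1 / p)

/-- The normalized Schatten `p`-norm `|||M|||_p = (k⁻¹ Tr |M|^p)^{1/p}`. -/
noncomputable def nschatten (p : ℝ) (M : Mat a) : ℝ :=
  ((Fintype.card a : ℝ)⁻¹ *
    ∑ i, (Matrix.posSemidef_conjTranspose_mul_self M).isHermitian.eigenvalues i ^ (p / 2)) ^ (1 / p)

/-- The `p → q` operator norm of a superoperator, for the Schatten norms. -/
noncomputable def opNorm (p q : ℝ) (L : Mat a →ₗ[ℂ] Mat a) : ℝ :=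
  ⨆ M : Mat a, schatten q (L M) / schatten p M

/-- The `p → q` operator norm of a superoperator, for the normalized Schatten norms. -/
noncomputable def nOpNorm (p q : ℝ) (L : Mat a →ₗ[ℂ] Mat a) : ℝ :=
  ⨆ M : Mat a, nschatten q (L M) / nschatten p M

/-- A superoperator is self-adjoint w.r.t. the inner product `⟨A, B⟩ = Tr(Aᴴ B)`. -/
def IsSelfAdjointMap (L : Mat a →ₗ[ℂ] Mat a) : Prop :=
  ∀ A B : Mat a, (Aᴴ * L B).trace = ((L A)ᴴ * B).trace

/-- A superoperator is positive semidefinite: self-adjoint and `⟨M, L M⟩ ≥ 0` for all `M`. -/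
def IsPosSemidefMap (L : Mat a →ₗ[ℂ] Mat a) : Prop :=
  IsSelfAdjointMap L ∧ ∀ M : Mat a, 0 ≤ (Mᴴ * L M).trace

/-- The tensor product `L₁ ⊗ L₂` of two superoperators, acting on matrices indexed by
`a × b`, characterized by `(L₁ ⊗ L₂)(E_{ik} ⊗ E_{jl}) = L₁(E_{ik}) ⊗ L₂(E_{jl})` on the
basis of matrix units and extended linearly. -/
noncomputable def tensorMap (L₁ : Mat a →ₗ[ℂ] Mat a) (L₂ : Mat b →ₗ[ℂ] Mat b) :
    Mat (a × b) →ₗ[ℂ] Mat (a × b) where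
  toFun M := Matrix.of fun s t => ∑ i : a, ∑ k : a, ∑ j : b, ∑ l : b,
      L₁ (Matrix.single i k 1) s.1 t.1 *
        L₂ (Matrix.single j l 1) s.2 t.2 * M (i, j) (k, l)
  map_add' M N := by
    ext s t
    simp [Matrix.add_apply, mul_add, Finset.sum_add_distrib]
  map_smul' c M := by
    ext s t
    simp only [Matrix.smul_apply, smul_eq_mul, Matrix.of_apply, RingHom.id_apply,
      Finset.mul_sum]
    exact Finset.sum_congr rfl fun i _ => Finset.sum_congr rfl fun k _ =>
      Finset.sum_congr rfl fun j _ => Finset.sum_congr rfl fun l _ => by ring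

/-- The `n`-fold tensor product `L 1 ⊗ L 2 ⊗ ⋯ ⊗ L n` of qubit superoperators, acting on
`2^n × 2^n` matrices indexed by the boolean cube `Fin n → Fin 2`; it is characterized by
its action `⊗_j (L j)(E_{u_j v_j})` on the tensor basis of matrix units, extended linearly. -/
noncomputable def tensorPow {n : ℕ} (L : Fin n → (Mat (Fin 2) →ₗ[ℂ] Mat (Fin 2))) :
    Mat (Fin n → Fin 2) →ₗ[ℂ] Mat (Fin n → Fin 2) where
  toFun M := Matrix.of fun s t => ∑ u : Fin n → Fin 2, ∑ v : Fin n → Fin 2,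
      (∏ j, (L j) (Matrix.single (u j) (v j) 1) (s j) (t j)) * M u v
  map_add' M N := by
    ext s t
    simp [Matrix.add_apply, mul_add, Finset.sum_add_distrib]
  map_smul' c M := by
    ext s t
    simp only [Matrix.smul_apply, smul_eq_mul, Matrix.of_apply, RingHom.id_apply,
      Finset.mul_sum]
    exact Finset.sum_congr rfl fun u _ => Finset.sum_congr rfl fun v _ => by ring

/-- A superoperator `L` is completely positive if `id_m ⊗ L` preserves positive
semidefiniteness for every `m`. -/
def IsCompletelyPositive (L : Mat a →ₗ[ℂ] Mat a) : Prop :=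
  ∀ m : ℕ, ∀ A : Mat (Fin m × a), A.PosSemidef → ((tensorMap LinearMap.id L) A).PosSemidef

/-- A superoperator is trace preserving if it preserves traces. -/
def IsTracePreserving (L : Mat a →ₗ[ℂ] Mat a) : Prop :=
  ∀ M : Mat a, (L M).trace = M.trace

/-- A unital qubit channel: completely positive, trace preserving, and unital. -/
def IsUnitalQubitChannel (Φ : Mat (Fin 2) →ₗ[ℂ] Mat (Fin 2)) : Prop :=
  IsCompletelyPositive Φ ∧ IsTracePreserving Φ ∧ Φ 1 = 1

/-- The exponential `e^L` of a superoperator, defined via the exponential of its matrix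
in the standard basis of the matrix algebra. -/
noncomputable def expMap (L : Mat a →ₗ[ℂ] Mat a) : Mat a →ₗ[ℂ] Mat a :=
  Matrix.toLin (Matrix.stdBasis ℂ a a) (Matrix.stdBasis ℂ a a)
    (NormedSpace.exp (LinearMap.toMatrix (Matrix.stdBasis ℂ a a) (Matrix.stdBasis ℂ a a) L))

/-- The set `G` of generators: `H(I₂) = 0`, `H` self-adjoint and positive semidefinite. -/
def memG (H : Mat (Fin 2) →ₗ[ℂ] Mat (Fin 2)) : Prop :=
  H 1 = 0 ∧ IsPosSemidefMap H

/-- The set `G^{CP}` of generators in `G` whose semigroup `e^{-tH}` is completely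
positive for all `t ≥ 0`. -/
def memGCP (H : Mat (Fin 2) →ₗ[ℂ] Mat (Fin 2)) : Prop :=
  memG H ∧ ∀ t : ℝ, 0 ≤ t → IsCompletelyPositive (expMap ((-(t : ℂ)) • H))

/-- `‖H‖_min`, the infimum of the Rayleigh quotient of `H` over traceless nonzero matrices. -/
noncomputable def normMin (H : Mat (Fin 2) →ₗ[ℂ] Mat (Fin 2)) : ℝ :=
  ⨅ M : {M : Mat (Fin 2) // M.trace = 0 ∧ M ≠ 0},
    ((M.1ᴴ * H M.1).trace).re / ((M.1ᴴ * M.1).trace).re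

/-- The set `G^{CP}_1` of unit-rate generators. -/
def memGCP1 (H : Mat (Fin 2) →ₗ[ℂ] Mat (Fin 2)) : Prop :=
  memGCP H ∧ normMin H = 1

/-- The Pauli matrices `σ₀ = I₂, σ₁, σ₂, σ₃`. -/
noncomputable def pauli : Fin 4 → Mat (Fin 2) :=
  ![1, !![0, 1; 1, 0], !![0, -Complex.I; Complex.I, 0], !![1, 0; 0, -1]]

/-- The qubit depolarizing channel `Δ_λ(M) = λ M + ((1-λ)/2) Tr(M) I₂`. -/
noncomputable def depol (l : ℝ) : Mat (Fin 2) →ₗ[ℂ] Mat (Fin 2) where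
  toFun M := (l : ℂ) • M + (((1 - l : ℝ) : ℂ) / 2 * M.trace) • 1
  map_add' M N := by
    simp only [Matrix.trace_add, mul_add, add_smul, smul_add]
    abel
  map_smul' c M := by
    simp only [Matrix.trace_smul, smul_eq_mul, smul_smul, smul_add, RingHom.id_apply]
    rw [mul_left_comm]
    ring_nf

/-- The uniform generator `H_u(M) = M - (1/2) Tr(M) I₂`. -/
noncomputable def uniformGen : Mat (Fin 2) →ₗ[ℂ] Mat (Fin 2) where
  toFun M := M - (M.trace / 2) • 1
  map_add' M N := by
    simp only [Matrix.trace_add, add_div, add_smul]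
    abel
  map_smul' c M := by
    simp only [Matrix.trace_smul, smul_eq_mul, RingHom.id_apply, smul_sub, smul_smul,
      mul_div_assoc]

/-- The matrix `f(A)` obtained by applying `f : ℝ → ℝ` to a Hermitian matrix `A` via the
spectral decomposition (functional calculus). -/
noncomputable def herFun (A : Mat a) (hA : A.IsHermitian) (f : ℝ → ℝ) : Mat a :=
  (hA.eigenvectorUnitary : Mat a) *
    Matrix.diagonal (fun i => (f (hA.eigenvalues i) : ℂ)) *
    (hA.eigenvectorUnitary : Mat a)ᴴ

/-- The real power `A^r` of a positive semidefinite matrix, via functional calculus. -/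
noncomputable def posPow (A : Mat a) (hA : A.IsHermitian) (r : ℝ) : Mat a :=
  herFun A hA (fun x => x ^ r)

/-- The diagonal qubit generator `H = (h₁, h₂, h₃)` in the Pauli basis:
`H(σ₀) = 0` and `H(σᵢ) = hᵢ σᵢ` for `i = 1,2,3`. -/
noncomputable def diagGen (h₁ h₂ h₃ : ℝ) : Mat (Fin 2) →ₗ[ℂ] Mat (Fin 2) where
  toFun M := ((h₁ : ℂ) * ((pauli 1 * M).trace / 2)) • pauli 1
    + ((h₂ : ℂ) * ((pauli 2 * M).trace / 2)) • pauli 2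
    + ((h₃ : ℂ) * ((pauli 3 * M).trace / 2)) • pauli 3
  map_add' M N := by
    simp only [Matrix.mul_add, Matrix.trace_add, add_div, mul_add, add_smul]
    abel
  map_smul' c M := by
    simp only [Matrix.mul_smul, Matrix.trace_smul, smul_eq_mul, RingHom.id_apply, smul_add,
      smul_smul]
    ring_nf

end QHC

namespace QHC

open NormedSpace

-- trace = sum of eigenvalues
lemma her_trace {n : Type*} [Fintype n] [DecidableEq n] {A : Matrix n n ℂ}
    (hA : A.IsHermitian) : A.trace = ∑ i, (hA.eigenvalues i : ℂ) := by
  conv_lhs => rw [hA.spectral_theorem]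
  rw [Unitary.conjStarAlgAut_apply]
  rw [Matrix.trace_mul_cycle]
  rw [(Matrix.mem_unitaryGroup_iff').mp (hA.eigenvectorUnitary).2]
  simp [Matrix.trace_diagonal]

lemma eig2 {A : Matrix (Fin 2) (Fin 2) ℂ} (hA : A.IsHermitian) (α β : ℝ)
    (htr : A.trace = ((α + β : ℝ) : ℂ)) (hdet : A.det = ((α * β : ℝ) : ℂ)) (r : ℝ) :
    ∑ i, hA.eigenvalues i ^ r = α ^ r + β ^ r := by
  have h1 : hA.eigenvalues 0 + hA.eigenvalues 1 = α + β := by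
    have := (her_trace hA).symm.trans htr
    rw [Fin.sum_univ_two, ← Complex.ofReal_add] at this
    exact Complex.ofReal_injective this
  have h2 : hA.eigenvalues 0 * hA.eigenvalues 1 = α * β := by
    have := hA.det_eq_prod_eigenvalues.symm.trans hdet
    rw [Fin.prod_univ_two, ← RCLike.ofReal_mul (K := ℂ)] at this
    exact RCLike.ofReal_injective (K := ℂ) this
  have key : (hA.eigenvalues 0 - α) * (hA.eigenvalues 0 - β) = 0 := by linear_combination hA.eigenvalues 0 * h1 - h2
  rw [Fin.sum_univ_two]
  rcases mul_eq_zero.mp key with h | h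
  · have e0 : hA.eigenvalues 0 = α := by linarith
    have e1 : hA.eigenvalues 1 = β := by linarith
    rw [e0, e1]
  · have e0 : hA.eigenvalues 0 = β := by linarith
    have e1 : hA.eigenvalues 1 = α := by linarith
    rw [e0, e1, add_comm]

lemma hasSum_exp_matrix {ι : Type*} [Fintype ι] [DecidableEq ι] (T : Matrix ι ι ℂ) :
    HasSum (fun n : ℕ => ((n.factorial : ℂ))⁻¹ • T ^ n) (exp T) := by
  letI : SeminormedRing (Matrix ι ι ℂ) := Matrix.linftyOpSemiNormedRing
  letI : NormedRing (Matrix ι ι ℂ) := Matrix.linftyOpNormedRing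
  letI : NormedAlgebra ℂ (Matrix ι ι ℂ) := Matrix.linftyOpNormedAlgebra
  exact exp_series_hasSum_exp' (𝕂 := ℂ) T

lemma exp_mulVec_eigen {ι : Type*} [Fintype ι] [DecidableEq ι] (T : Matrix ι ι ℂ)
    (x : ι → ℂ) (μ : ℂ) (h : T.mulVec x = μ • x) :
    (exp T).mulVec x = Complex.exp μ • x := by
  have hpow : ∀ n : ℕ, (T ^ n).mulVec x = μ ^ n • x := by
    intro n; induction n with
    | zero => simp
    | succ n ih =>
      rw [pow_succ', ← Matrix.mulVec_mulVec, ih, Matrix.mulVec_smul, h, smul_smul, ← pow_succ]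
  let g : Matrix ι ι ℂ →ₗ[ℂ] (ι → ℂ) :=
    { toFun := fun M => M.mulVec x
      map_add' := fun M N => Matrix.add_mulVec M N x
      map_smul' := fun c M => Matrix.smul_mulVec c M x }
  have h1 := (hasSum_exp_matrix T).mapL g.toContinuousLinearMap
  have h1' : HasSum (fun n : ℕ => ((n.factorial : ℂ))⁻¹ • μ ^ n • x) ((exp T).mulVec x) := by
    simpa [g, hpow] using h1
  have h2 : HasSum (fun n : ℕ => ((n.factorial : ℂ))⁻¹ • μ ^ n) (Complex.exp μ) := by
    rw [Complex.exp_eq_exp_ℂ]; exact exp_series_hasSum_exp' (𝕂 := ℂ) μ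
  have h3 : HasSum (fun n : ℕ => ((n.factorial : ℂ))⁻¹ • μ ^ n • x) (Complex.exp μ • x) := by
    simpa [smul_smul] using h2.smul_const x
  exact h1'.unique h3

lemma expMap_eigen {a : Type*} [Fintype a] [DecidableEq a]
    (L : Mat a →ₗ[ℂ] Mat a) (v : Mat a) (μ : ℂ) (h : L v = μ • v) :
    expMap L v = Complex.exp μ • v := by
  set b := Matrix.stdBasis ℂ a a with hb
  set T := LinearMap.toMatrix b b L with hT
  have h1 : T.mulVec (b.repr v) = μ • (b.repr v : (a × a) → ℂ) := by
    rw [hT, LinearMap.toMatrix_mulVec_repr, h, map_smul]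
    rfl
  have h2 := exp_mulVec_eigen T _ _ h1
  have h5 : ((exp T).mulVec (b.repr v)) = (b.repr (expMap L v) : (a × a) → ℂ) := by
    have h6 := LinearMap.toMatrix_mulVec_repr b b (expMap L) v
    rwa [show LinearMap.toMatrix b b (expMap L) = exp T from
      LinearMap.toMatrix_toLin b b _] at h6
  have h7 : (b.repr (expMap L v) : (a × a) → ℂ) = (b.repr (Complex.exp μ • v) : (a × a) → ℂ) := by
    rw [← h5, h2, map_smul]
    rfl
  exact b.repr.injective (DFunLike.coe_injective h7)



lemma pauli_comb (c₀ a₁ a₂ a₃ : ℝ) :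
    (c₀ : ℂ) • (1 : Mat (Fin 2)) + (a₁ : ℂ) • pauli 1 + (a₂ : ℂ) • pauli 2
      + (a₃ : ℂ) • pauli 3 =
    !![(c₀ : ℂ) + a₃, (a₁ : ℂ) - a₂ * Complex.I;
       (a₁ : ℂ) + a₂ * Complex.I, (c₀ : ℂ) - a₃] := by
  ext i j
  fin_cases i <;> fin_cases j <;>
    simp [pauli, Matrix.one_apply] <;> ring

lemma comb_trace (c₀ a₁ a₂ a₃ : ℝ) :
    (!![(c₀ : ℂ) + a₃, (a₁ : ℂ) - a₂ * Complex.I;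
       (a₁ : ℂ) + a₂ * Complex.I, (c₀ : ℂ) - a₃]ᴴ *
     !![(c₀ : ℂ) + a₃, (a₁ : ℂ) - a₂ * Complex.I;
       (a₁ : ℂ) + a₂ * Complex.I, (c₀ : ℂ) - a₃]).trace
      = ((2*c₀^2 + 2*(a₁^2+a₂^2+a₃^2) : ℝ) : ℂ) := by
  simp [Matrix.trace_fin_two, Matrix.mul_apply, Matrix.conjTranspose_apply, Fin.sum_univ_two,
    Complex.ext_iff, ← Complex.ofReal_pow]
  constructor <;> ring

lemma comb_det (c₀ a₁ a₂ a₃ : ℝ) :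
    (!![(c₀ : ℂ) + a₃, (a₁ : ℂ) - a₂ * Complex.I;
       (a₁ : ℂ) + a₂ * Complex.I, (c₀ : ℂ) - a₃]ᴴ *
     !![(c₀ : ℂ) + a₃, (a₁ : ℂ) - a₂ * Complex.I;
       (a₁ : ℂ) + a₂ * Complex.I, (c₀ : ℂ) - a₃]).det
      = (((c₀^2 - (a₁^2+a₂^2+a₃^2))^2 : ℝ) : ℂ) := by
  rw [Matrix.det_mul, Matrix.det_conjTranspose]
  simp [Matrix.det_fin_two, Complex.ext_iff, ← Complex.ofReal_pow]
  constructor <;> ring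

lemma schatten_pauli (q c₀ a₁ a₂ a₃ : ℝ)
    (hc : Real.sqrt (a₁^2 + a₂^2 + a₃^2) ≤ c₀) :
    schatten q ((c₀ : ℂ) • (1 : Mat (Fin 2)) + (a₁ : ℂ) • pauli 1 + (a₂ : ℂ) • pauli 2
      + (a₃ : ℂ) • pauli 3)
      = ((c₀ + Real.sqrt (a₁^2 + a₂^2 + a₃^2)) ^ q
        + (c₀ - Real.sqrt (a₁^2 + a₂^2 + a₃^2)) ^ q) ^ (1 / q) := by
  have hnn : (0:ℝ) ≤ a₁^2 + a₂^2 + a₃^2 := by positivity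
  set s := Real.sqrt (a₁^2 + a₂^2 + a₃^2) with hs
  have hs0 : 0 ≤ s := Real.sqrt_nonneg _
  have hs2 : s ^ 2 = a₁^2 + a₂^2 + a₃^2 := Real.sq_sqrt hnn
  set M := (c₀ : ℂ) • (1 : Mat (Fin 2)) + (a₁ : ℂ) • pauli 1 + (a₂ : ℂ) • pauli 2
      + (a₃ : ℂ) • pauli 3 with hM
  have htr : (Mᴴ * M).trace = (((c₀ + s)^2 + (c₀ - s)^2 : ℝ) : ℂ) := by
    rw [hM, pauli_comb, comb_trace]
    congr 1
    linear_combination -2 * hs2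
  have hdet : (Mᴴ * M).det = ((((c₀ + s)^2) * ((c₀ - s)^2) : ℝ) : ℂ) := by
    rw [hM, pauli_comb, comb_det]
    congr 1
    rw [← hs2]
    ring
  have hpow : ∀ x : ℝ, 0 ≤ x → (x^2 : ℝ) ^ (q/2) = x ^ q := by
    intro x hx
    rw [← Real.rpow_natCast x 2, ← Real.rpow_mul hx,
      show ((2:ℕ):ℝ) * (q/2) = q by push_cast; ring]
  unfold schatten
  rw [eig2 (Matrix.posSemidef_conjTranspose_mul_self M).isHermitian ((c₀+s)^2) ((c₀-s)^2)
    htr hdet (q/2), hpow _ (by linarith), hpow _ (by linarith)]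

lemma sum_rpow_mono (q c₀ s s' : ℝ) (hq : 1 ≤ q) (h0 : 0 ≤ s) (hss' : s ≤ s')
    (hs'c : s' ≤ c₀) :
    (c₀ + s) ^ q + (c₀ - s) ^ q ≤ (c₀ + s') ^ q + (c₀ - s') ^ q := by
  rcases eq_or_lt_of_le (h0.trans hss') with h | h
  · have hs0 : s = 0 := le_antisymm (hss'.trans h.symm.le) h0
    rw [hs0, ← h]
  · set θ := (s' + s) / (2 * s') with hθ
    have hθ0 : 0 ≤ θ := by positivity
    have hθ1 : θ ≤ 1 := by
      rw [hθ, div_le_one (by linarith)]; linarith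
    have hcx := convexOn_rpow hq
    have m1 : (0:ℝ) ≤ c₀ + s' := by linarith
    have m2 : (0:ℝ) ≤ c₀ - s' := by linarith
    have e1 : θ • (c₀ + s') + (1 - θ) • (c₀ - s') = c₀ + s := by
      simp only [smul_eq_mul, hθ]; field_simp; ring
    have e2 : (1 - θ) • (c₀ + s') + θ • (c₀ - s') = c₀ - s := by
      simp only [smul_eq_mul, hθ]; field_simp; ring
    have i1 := hcx.2 (Set.mem_Ici.mpr m1) (Set.mem_Ici.mpr m2) hθ0
      (by linarith : (0:ℝ) ≤ 1 - θ) (by ring)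
    rw [e1] at i1
    have i2 := hcx.2 (Set.mem_Ici.mpr m1) (Set.mem_Ici.mpr m2)
      (by linarith : (0:ℝ) ≤ 1 - θ) hθ0 (by ring)
    rw [e2] at i2
    simp only [smul_eq_mul] at i1 i2
    linarith

/-- For a diagonal generator `H = (h₁, h₂, h₃)` with `hᵢ ≥ 1` and a positive semidefinite
`C = c₀σ₀ + c₁σ₁ + c₂σ₂ + c₃σ₃`, with `C̃ = c₀σ₀ + √(c₁² + c₂² + c₃²) σ₃`, one has
`‖e^{-tH}(C)‖_q ≤ ‖Δ_{e^{-t}}(C̃)‖_q` for all `t ≥ 0` and `q ≥ 1`. -/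
theorem schatten_exp_diag_le_depol
    (h₁ h₂ h₃ : ℝ) (hh₁ : 1 ≤ h₁) (hh₂ : 1 ≤ h₂) (hh₃ : 1 ≤ h₃)
    (H : Mat (Fin 2) →ₗ[ℂ] Mat (Fin 2)) (hH0 : H 1 = 0)
    (hH1 : H (pauli 1) = (h₁ : ℂ) • pauli 1)
    (hH2 : H (pauli 2) = (h₂ : ℂ) • pauli 2)
    (hH3 : H (pauli 3) = (h₃ : ℂ) • pauli 3)
    (c₀ c₁ c₂ c₃ : ℝ) (C : Mat (Fin 2)) (hC : C.PosSemidef)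
    (hCexp : C = (c₀ : ℂ) • 1 + (c₁ : ℂ) • pauli 1 + (c₂ : ℂ) • pauli 2 +
      (c₃ : ℂ) • pauli 3)
    (t : ℝ) (ht : 0 ≤ t) (q : ℝ) (hq : 1 ≤ q) :
    schatten q (expMap ((-(t : ℂ)) • H) C) ≤
      schatten q (depol (Real.exp (-t))
        ((c₀ : ℂ) • 1 + (↑(Real.sqrt (c₁ ^ 2 + c₂ ^ 2 + c₃ ^ 2)) : ℂ) • pauli 3)) := by
  have hq0 : (0:ℝ) < q := lt_of_lt_of_le one_pos hq
  have hnn : (0:ℝ) ≤ c₁^2 + c₂^2 + c₃^2 := by positivity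
  -- PSD facts about C
  have htrC : C.trace = ((c₀ + c₀ : ℝ) : ℂ) := by
    rw [hCexp, pauli_comb]
    simp [Matrix.trace_fin_two]
    try push_cast
    try ring
  have hdetC : C.det = ((c₀^2 - (c₁^2+c₂^2+c₃^2) : ℝ) : ℂ) := by
    rw [hCexp, pauli_comb]
    simp [Matrix.det_fin_two, Complex.ext_iff, ← Complex.ofReal_pow]
    constructor <;> ring
  have he0 := hC.eigenvalues_nonneg 0
  have he1 := hC.eigenvalues_nonneg 1
  have hsum : hC.1.eigenvalues 0 + hC.1.eigenvalues 1 = c₀ + c₀ := by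
    have h := (her_trace hC.1).symm.trans htrC
    rw [Fin.sum_univ_two, ← Complex.ofReal_add] at h
    exact Complex.ofReal_injective h
  have hprod : hC.1.eigenvalues 0 * hC.1.eigenvalues 1 = c₀^2 - (c₁^2+c₂^2+c₃^2) := by
    have h := hC.1.det_eq_prod_eigenvalues.symm.trans hdetC
    rw [Fin.prod_univ_two, ← RCLike.ofReal_mul (K := ℂ)] at h
    exact RCLike.ofReal_injective (K := ℂ) h
  have hc0 : 0 ≤ c₀ := by linarith
  have hr0 : 0 ≤ Real.sqrt (c₁^2 + c₂^2 + c₃^2) := Real.sqrt_nonneg _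
  have hr2 : (Real.sqrt (c₁^2 + c₂^2 + c₃^2))^2 = c₁^2 + c₂^2 + c₃^2 := Real.sq_sqrt hnn
  have hrc : Real.sqrt (c₁^2 + c₂^2 + c₃^2) ≤ c₀ := by nlinarith
  have het1 : Real.exp (-t) ≤ 1 := by
    rw [← Real.exp_zero]
    exact Real.exp_le_exp.mpr (by linarith)
  -- the evolved matrix
  have E0 : expMap ((-(t:ℂ)) • H) (1 : Mat (Fin 2)) = 1 := by
    have := expMap_eigen ((-(t:ℂ)) • H) 1 0 (by simp [hH0])
    simpa using this
  have E1 : expMap ((-(t:ℂ)) • H) (pauli 1) = ((Real.exp (-(t*h₁)) : ℝ) : ℂ) • pauli 1 := by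
    have := expMap_eigen ((-(t:ℂ)) • H) (pauli 1) ((-(t*h₁) : ℝ) : ℂ) (by
      rw [LinearMap.smul_apply, hH1, smul_smul]
      congr 1
      push_cast
      ring)
    rw [this, Complex.ofReal_exp]
  have E2 : expMap ((-(t:ℂ)) • H) (pauli 2) = ((Real.exp (-(t*h₂)) : ℝ) : ℂ) • pauli 2 := by
    have := expMap_eigen ((-(t:ℂ)) • H) (pauli 2) ((-(t*h₂) : ℝ) : ℂ) (by
      rw [LinearMap.smul_apply, hH2, smul_smul]
      congr 1
      push_cast
      ring)
    rw [this, Complex.ofReal_exp]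
  have E3 : expMap ((-(t:ℂ)) • H) (pauli 3) = ((Real.exp (-(t*h₃)) : ℝ) : ℂ) • pauli 3 := by
    have := expMap_eigen ((-(t:ℂ)) • H) (pauli 3) ((-(t*h₃) : ℝ) : ℂ) (by
      rw [LinearMap.smul_apply, hH3, smul_smul]
      congr 1
      push_cast
      ring)
    rw [this, Complex.ofReal_exp]
  have hexp : expMap ((-(t:ℂ)) • H) C
      = (c₀ : ℂ) • (1 : Mat (Fin 2))
        + ((c₁ * Real.exp (-(t*h₁)) : ℝ) : ℂ) • pauli 1
        + ((c₂ * Real.exp (-(t*h₂)) : ℝ) : ℂ) • pauli 2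
        + ((c₃ * Real.exp (-(t*h₃)) : ℝ) : ℂ) • pauli 3 := by
    rw [hCexp, map_add, map_add, map_add, map_smul, map_smul, map_smul, map_smul,
      E0, E1, E2, E3, smul_smul, smul_smul, smul_smul]
    norm_cast
  -- the depolarized matrix
  have htr3 : ((c₀ : ℂ) • (1 : Mat (Fin 2))
      + (↑(Real.sqrt (c₁ ^ 2 + c₂ ^ 2 + c₃ ^ 2)) : ℂ) • pauli 3).trace = 2 * (c₀ : ℂ) := by
    simp [pauli, Matrix.trace_fin_two]
    ring
  have hdep : depol (Real.exp (-t))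
      ((c₀ : ℂ) • 1 + (↑(Real.sqrt (c₁ ^ 2 + c₂ ^ 2 + c₃ ^ 2)) : ℂ) • pauli 3)
      = (c₀ : ℂ) • (1 : Mat (Fin 2)) + ((0:ℝ) : ℂ) • pauli 1 + ((0:ℝ) : ℂ) • pauli 2
        + ((Real.exp (-t) * Real.sqrt (c₁ ^ 2 + c₂ ^ 2 + c₃ ^ 2) : ℝ) : ℂ) • pauli 3 := by
    simp only [depol, LinearMap.coe_mk, AddHom.coe_mk, htr3]
    ext i j
    fin_cases i <;> fin_cases j <;>
      simp [pauli, Matrix.one_apply] <;> push_cast <;> ring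
  -- bounding the singular radius
  have eb : ∀ h : ℝ, 1 ≤ h → Real.exp (-(t*h)) ≤ Real.exp (-t) := fun h hh =>
    Real.exp_le_exp.mpr (by nlinarith)
  have hbd : (c₁ * Real.exp (-(t*h₁)))^2 + (c₂ * Real.exp (-(t*h₂)))^2
      + (c₃ * Real.exp (-(t*h₃)))^2
      ≤ (Real.exp (-t))^2 * (c₁^2 + c₂^2 + c₃^2) := by
    have k1 : (c₁ * Real.exp (-(t*h₁)))^2 ≤ c₁^2 * (Real.exp (-t))^2 := by
      rw [mul_pow]
      exact mul_le_mul_of_nonneg_left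
        (pow_le_pow_left₀ (Real.exp_nonneg _) (eb h₁ hh₁) 2) (sq_nonneg c₁)
    have k2 : (c₂ * Real.exp (-(t*h₂)))^2 ≤ c₂^2 * (Real.exp (-t))^2 := by
      rw [mul_pow]
      exact mul_le_mul_of_nonneg_left
        (pow_le_pow_left₀ (Real.exp_nonneg _) (eb h₂ hh₂) 2) (sq_nonneg c₂)
    have k3 : (c₃ * Real.exp (-(t*h₃)))^2 ≤ c₃^2 * (Real.exp (-t))^2 := by
      rw [mul_pow]
      exact mul_le_mul_of_nonneg_left
        (pow_le_pow_left₀ (Real.exp_nonneg _) (eb h₃ hh₃) 2) (sq_nonneg c₃)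
    nlinarith [k1, k2, k3]
  have hse : Real.sqrt ((c₁ * Real.exp (-(t*h₁)))^2 + (c₂ * Real.exp (-(t*h₂)))^2
        + (c₃ * Real.exp (-(t*h₃)))^2)
      ≤ Real.exp (-t) * Real.sqrt (c₁^2 + c₂^2 + c₃^2) := by
    calc Real.sqrt ((c₁ * Real.exp (-(t*h₁)))^2 + (c₂ * Real.exp (-(t*h₂)))^2
          + (c₃ * Real.exp (-(t*h₃)))^2)
        ≤ Real.sqrt ((Real.exp (-t))^2 * (c₁^2 + c₂^2 + c₃^2)) := Real.sqrt_le_sqrt hbd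
      _ = Real.exp (-t) * Real.sqrt (c₁^2 + c₂^2 + c₃^2) := by
          rw [Real.sqrt_mul (sq_nonneg _), Real.sqrt_sq (Real.exp_nonneg _)]
  have hsc : Real.sqrt ((c₁ * Real.exp (-(t*h₁)))^2 + (c₂ * Real.exp (-(t*h₂)))^2
      + (c₃ * Real.exp (-(t*h₃)))^2) ≤ c₀ := by
    refine hse.trans ?_
    calc Real.exp (-t) * Real.sqrt (c₁^2 + c₂^2 + c₃^2)
        ≤ 1 * Real.sqrt (c₁^2 + c₂^2 + c₃^2) := by
          exact mul_le_mul_of_nonneg_right het1 hr0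
      _ ≤ c₀ := by rw [one_mul]; exact hrc
  have hec : Real.exp (-t) * Real.sqrt (c₁^2 + c₂^2 + c₃^2) ≤ c₀ := by
    calc Real.exp (-t) * Real.sqrt (c₁^2 + c₂^2 + c₃^2)
        ≤ 1 * Real.sqrt (c₁^2 + c₂^2 + c₃^2) := mul_le_mul_of_nonneg_right het1 hr0
      _ ≤ c₀ := by rw [one_mul]; exact hrc
  have hsq0 : Real.sqrt (0^2 + 0^2 + (Real.exp (-t) * Real.sqrt (c₁^2 + c₂^2 + c₃^2))^2)
      = Real.exp (-t) * Real.sqrt (c₁^2 + c₂^2 + c₃^2) := by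
    rw [show (0:ℝ)^2 + 0^2 + (Real.exp (-t) * Real.sqrt (c₁^2 + c₂^2 + c₃^2))^2
      = (Real.exp (-t) * Real.sqrt (c₁^2 + c₂^2 + c₃^2))^2 by ring]
    exact Real.sqrt_sq (by positivity)
  rw [hexp, hdep, schatten_pauli q c₀ _ _ _ hsc, schatten_pauli q c₀ _ _ _ (by rw [hsq0]; exact hec)]
  rw [hsq0]
  set s := Real.sqrt ((c₁ * Real.exp (-(t*h₁)))^2 + (c₂ * Real.exp (-(t*h₂)))^2
    + (c₃ * Real.exp (-(t*h₃)))^2) with hs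
  have hs0 : 0 ≤ s := Real.sqrt_nonneg _
  have hmono := sum_rpow_mono q c₀ s (Real.exp (-t) * Real.sqrt (c₁^2 + c₂^2 + c₃^2))
    hq hs0 hse hec
  apply Real.rpow_le_rpow _ hmono (by positivity)
  have b1 : (0:ℝ) ≤ (c₀ + s) ^ q := Real.rpow_nonneg (by linarith) q
  have b2 : (0:ℝ) ≤ (c₀ - s) ^ q := Real.rpow_nonneg (by linarith) q
  linarith

end QHC
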